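/- Let φ : ℝ² → ℝ be a C² function satisfying the symmetry-determining equation (1 + p²)·∂²φ/∂p² + 2pq·∂²φ/∂p∂q + (1 + q²)·∂²φ/∂q² = 0 at every point (p,q) ∈ ℝ². Then for every open set Ω ⊆ ℝ² and every C³ solution u : Ω → ℝ of the minimal surface equation E(u) = 0, the function v := φ(∂ₓu, ∂_yu) is an infinitesimal symmetry: for every point (x,y) ∈ Ω, the function ε ↦ E(u + εv)(x,y) is differentiable at ε = 0 with derivative 0. -/

import Mathlib

/-- Partial derivative in the `x` direction of a function on `ℝ²`. -/
noncomputable def px (f : ℝ × ℝ → ℝ) (z : ℝ × ℝ) : ℝ := fderiv ℝ f z (1, 0)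

/-- Partial derivative in the `y` direction of a function on `ℝ²`. -/
noncomputable def py (f : ℝ × ℝ → ℝ) (z : ℝ × ℝ) : ℝ := fderiv ℝ f z (0, 1)

/-- The two-dimensional minimal surface operator
`E(w) = (1 + w_y²)·w_xx − 2·w_x·w_y·w_xy + (1 + w_x²)·w_yy`. -/
noncomputable def msOp (w : ℝ × ℝ → ℝ) (z : ℝ × ℝ) : ℝ :=
  (1 + (py w z) ^ 2) * px (px w) z - 2 * px w z * py w z * py (px w) z
    + (1 + (px w z) ^ 2) * py (py w) z


open Filter

section helpers
variable {f g : ℝ × ℝ → ℝ} {z : ℝ × ℝ} {Ω : Set (ℝ × ℝ)}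

lemma pd_congr (e : ℝ × ℝ) (hΩ : IsOpen Ω) (hz : z ∈ Ω) (h : ∀ w ∈ Ω, f w = g w) :
    fderiv ℝ f z e = fderiv ℝ g z e := by
  rw [Filter.EventuallyEq.fderiv_eq (Filter.eventuallyEq_of_mem (hΩ.mem_nhds hz) h)]

lemma diff_congr (hΩ : IsOpen Ω) (hz : z ∈ Ω) (h : ∀ w ∈ Ω, f w = g w)
    (hg : DifferentiableAt ℝ g z) : DifferentiableAt ℝ f z :=
  (Filter.EventuallyEq.differentiableAt_iff
    (Filter.eventuallyEq_of_mem (hΩ.mem_nhds hz) h)).2 hg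

lemma pd_add_smul (c : ℝ) (e : ℝ × ℝ)
    (hf : DifferentiableAt ℝ f z) (hg : DifferentiableAt ℝ g z) :
    fderiv ℝ (fun w => f w + c * g w) z e = fderiv ℝ f z e + c * fderiv ℝ g z e := by
  have h : HasFDerivAt (fun w => f w + c * g w) (fderiv ℝ f z + c • fderiv ℝ g z) z :=
    hf.hasFDerivAt.add (hg.hasFDerivAt.const_mul c)
  rw [h.fderiv]; simp

lemma pd_add (e : ℝ × ℝ) (hf : DifferentiableAt ℝ f z) (hg : DifferentiableAt ℝ g z) :
    fderiv ℝ (fun w => f w + g w) z e = fderiv ℝ f z e + fderiv ℝ g z e := by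
  have h : HasFDerivAt (fun w => f w + g w) (fderiv ℝ f z + fderiv ℝ g z) z :=
    hf.hasFDerivAt.add hg.hasFDerivAt
  rw [h.fderiv]; simp

lemma pd_mul (e : ℝ × ℝ) (hf : DifferentiableAt ℝ f z) (hg : DifferentiableAt ℝ g z) :
    fderiv ℝ (fun w => f w * g w) z e = fderiv ℝ f z e * g z + f z * fderiv ℝ g z e := by
  have h := (hf.hasFDerivAt.mul hg.hasFDerivAt).fderiv
  rw [show (fun w => f w * g w) = f * g from rfl, h]; simp; ring

lemma pd_comp (ψ g₁ g₂ : ℝ × ℝ → ℝ) (e : ℝ × ℝ)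
    (hψ : DifferentiableAt ℝ ψ (g₁ z, g₂ z))
    (h1 : DifferentiableAt ℝ g₁ z) (h2 : DifferentiableAt ℝ g₂ z) :
    fderiv ℝ (fun w => ψ (g₁ w, g₂ w)) z e
      = fderiv ℝ ψ (g₁ z, g₂ z) (1, 0) * fderiv ℝ g₁ z e
        + fderiv ℝ ψ (g₁ z, g₂ z) (0, 1) * fderiv ℝ g₂ z e := by
  have hg : HasFDerivAt (fun w => (g₁ w, g₂ w))
      ((fderiv ℝ g₁ z).prod (fderiv ℝ g₂ z)) z := h1.hasFDerivAt.prodMk h2.hasFDerivAt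
  have h := (hψ.hasFDerivAt.comp z hg).fderiv
  rw [show (fun w => ψ (g₁ w, g₂ w)) = ψ ∘ fun w => (g₁ w, g₂ w) from rfl, h]
  show fderiv ℝ ψ (g₁ z, g₂ z) (fderiv ℝ g₁ z e, fderiv ℝ g₂ z e) = _
  have hvec : (fderiv ℝ g₁ z e, fderiv ℝ g₂ z e)
      = (fderiv ℝ g₁ z e) • ((1:ℝ), (0:ℝ)) + (fderiv ℝ g₂ z e) • ((0:ℝ), (1:ℝ)) := by
    simp
  rw [hvec, map_add, map_smul, map_smul]
  simp [mul_comm]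

lemma clairaut (hf : ContDiffAt ℝ 2 f z) : px (py f) z = py (px f) z := by
  have hd : DifferentiableAt ℝ (fderiv ℝ f) z :=
    (hf.fderiv_right (m := 1) (by norm_num)).differentiableAt (by norm_num)
  have key : ∀ e₁ e₂ : ℝ × ℝ, fderiv ℝ (fun w => fderiv ℝ f w e₁) z e₂
      = fderiv ℝ (fderiv ℝ f) z e₂ e₁ := by
    intro e₁ e₂
    have h : HasFDerivAt (fun w => fderiv ℝ f w e₁)
        ((ContinuousLinearMap.apply ℝ ℝ e₁).comp (fderiv ℝ (fderiv ℝ f) z)) z :=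
      (ContinuousLinearMap.apply ℝ ℝ e₁).hasFDerivAt.comp z hd.hasFDerivAt
    rw [h.fderiv]; rfl
  have hsymm := hf.isSymmSndFDerivAt (by simp)
  show fderiv ℝ (fun w => fderiv ℝ f w (0,1)) z (1,0)
      = fderiv ℝ (fun w => fderiv ℝ f w (1,0)) z (0,1)
  rw [key, key, hsymm]

lemma pdE (e : ℝ × ℝ) (p q r s t : ℝ × ℝ → ℝ)
    (hp : DifferentiableAt ℝ p z) (hq : DifferentiableAt ℝ q z)
    (hr : DifferentiableAt ℝ r z) (hs : DifferentiableAt ℝ s z)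
    (ht : DifferentiableAt ℝ t z) :
    fderiv ℝ (fun w => (1 + q w ^ 2) * r w - 2 * p w * q w * s w
        + (1 + p w ^ 2) * t w) z e
      = (2 * q z * fderiv ℝ q z e) * r z + (1 + q z ^ 2) * fderiv ℝ r z e
        - 2 * (fderiv ℝ p z e * q z * s z + p z * fderiv ℝ q z e * s z
            + p z * q z * fderiv ℝ s z e)
        + (2 * p z * fderiv ℝ p z e) * t z + (1 + p z ^ 2) * fderiv ℝ t z e := by
  have sq : ∀ (h : ℝ × ℝ → ℝ), (fun w => 1 + h w ^ 2) = fun w => 1 + h w * h w := by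
    intro h; funext w; ring
  have hq2 : DifferentiableAt ℝ (fun w => 1 + q w * q w) z :=
    ((hq.mul hq).const_add 1)
  have hp2 : DifferentiableAt ℝ (fun w => 1 + p w * p w) z :=
    ((hp.mul hp).const_add 1)
  have h2p : DifferentiableAt ℝ (fun w => 2 * p w) z := hp.const_mul 2
  have h2pq : DifferentiableAt ℝ (fun w => 2 * p w * q w) z := h2p.mul hq
  have hpd2 : ∀ (h : ℝ × ℝ → ℝ) (hh : DifferentiableAt ℝ h z),
      fderiv ℝ (fun w => 1 + h w * h w) z e = 2 * h z * fderiv ℝ h z e := by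
    intro h hh
    have hc : HasFDerivAt (fun w => 1 + h w * h w)
        ((h z • fderiv ℝ h z + h z • fderiv ℝ h z)) z := by
      simpa using ((hh.hasFDerivAt.mul hh.hasFDerivAt).const_add 1)
    rw [hc.fderiv]; simp; ring
  have key : (fun w => (1 + q w ^ 2) * r w - 2 * p w * q w * s w + (1 + p w ^ 2) * t w)
      = fun w => ((1 + q w * q w) * r w - (2 * p w * q w) * s w)
          + (1 + p w * p w) * t w := by
    funext w; ring
  rw [key]
  rw [pd_add (f := fun w => (1 + q w * q w) * r w - 2 * p w * q w * s w) (g := fun w => (1 + p w * p w) * t w) e ((hq2.mul hr).sub (h2pq.mul hs)) (hp2.mul ht)]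
  rw [show fderiv ℝ (fun w => (1 + q w * q w) * r w - 2 * p w * q w * s w) z e
      = fderiv ℝ (fun w => (1 + q w * q w) * r w) z e
        - fderiv ℝ (fun w => 2 * p w * q w * s w) z e from by
    have hc : HasFDerivAt (fun w => (1 + q w * q w) * r w - 2 * p w * q w * s w)
        (fderiv ℝ (fun w => (1 + q w * q w) * r w) z
          - fderiv ℝ (fun w => 2 * p w * q w * s w) z) z :=
      (hq2.mul hr).hasFDerivAt.sub (h2pq.mul hs).hasFDerivAt
    rw [hc.fderiv]; simp]
  rw [pd_mul e hq2 hr, pd_mul e hp2 ht, pd_mul e h2pq hs, pd_mul e h2p hq]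
  rw [hpd2 q hq, hpd2 p hp]
  rw [show fderiv ℝ (fun w => 2 * p w) z e = 2 * fderiv ℝ p z e from by
    have hc : HasFDerivAt (fun w => 2 * p w) ((2:ℝ) • fderiv ℝ p z) z :=
      hp.hasFDerivAt.const_mul 2
    rw [hc.fderiv]; simp]
  ring

end helpers

section pxpy
variable {f g : ℝ × ℝ → ℝ} {z : ℝ × ℝ} {Ω : Set (ℝ × ℝ)}

lemma px_congr (hΩ : IsOpen Ω) (hz : z ∈ Ω) (h : ∀ w ∈ Ω, f w = g w) :
    px f z = px g z := pd_congr (1,0) hΩ hz h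
lemma py_congr (hΩ : IsOpen Ω) (hz : z ∈ Ω) (h : ∀ w ∈ Ω, f w = g w) :
    py f z = py g z := pd_congr (0,1) hΩ hz h

lemma px_add_smul (c : ℝ) (hf : DifferentiableAt ℝ f z) (hg : DifferentiableAt ℝ g z) :
    px (fun w => f w + c * g w) z = px f z + c * px g z := pd_add_smul c (1,0) hf hg
lemma py_add_smul (c : ℝ) (hf : DifferentiableAt ℝ f z) (hg : DifferentiableAt ℝ g z) :
    py (fun w => f w + c * g w) z = py f z + c * py g z := pd_add_smul c (0,1) hf hg

lemma px_add (hf : DifferentiableAt ℝ f z) (hg : DifferentiableAt ℝ g z) :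
    px (fun w => f w + g w) z = px f z + px g z := pd_add (1,0) hf hg
lemma py_add (hf : DifferentiableAt ℝ f z) (hg : DifferentiableAt ℝ g z) :
    py (fun w => f w + g w) z = py f z + py g z := pd_add (0,1) hf hg

lemma px_mul (hf : DifferentiableAt ℝ f z) (hg : DifferentiableAt ℝ g z) :
    px (fun w => f w * g w) z = px f z * g z + f z * px g z := pd_mul (1,0) hf hg
lemma py_mul (hf : DifferentiableAt ℝ f z) (hg : DifferentiableAt ℝ g z) :
    py (fun w => f w * g w) z = py f z * g z + f z * py g z := pd_mul (0,1) hf hg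

lemma px_comp (ψ g₁ g₂ : ℝ × ℝ → ℝ) (hψ : DifferentiableAt ℝ ψ (g₁ z, g₂ z))
    (h1 : DifferentiableAt ℝ g₁ z) (h2 : DifferentiableAt ℝ g₂ z) :
    px (fun w => ψ (g₁ w, g₂ w)) z
      = px ψ (g₁ z, g₂ z) * px g₁ z + py ψ (g₁ z, g₂ z) * px g₂ z :=
  pd_comp ψ g₁ g₂ (1,0) hψ h1 h2
lemma py_comp (ψ g₁ g₂ : ℝ × ℝ → ℝ) (hψ : DifferentiableAt ℝ ψ (g₁ z, g₂ z))
    (h1 : DifferentiableAt ℝ g₁ z) (h2 : DifferentiableAt ℝ g₂ z) :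
    py (fun w => ψ (g₁ w, g₂ w)) z
      = px ψ (g₁ z, g₂ z) * py g₁ z + py ψ (g₁ z, g₂ z) * py g₂ z :=
  pd_comp ψ g₁ g₂ (0,1) hψ h1 h2

lemma pxE (p q r s t : ℝ × ℝ → ℝ)
    (hp : DifferentiableAt ℝ p z) (hq : DifferentiableAt ℝ q z)
    (hr : DifferentiableAt ℝ r z) (hs : DifferentiableAt ℝ s z)
    (ht : DifferentiableAt ℝ t z) :
    px (fun w => (1 + q w ^ 2) * r w - 2 * p w * q w * s w + (1 + p w ^ 2) * t w) z
      = (2 * q z * px q z) * r z + (1 + q z ^ 2) * px r z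
        - 2 * (px p z * q z * s z + p z * px q z * s z + p z * q z * px s z)
        + (2 * p z * px p z) * t z + (1 + p z ^ 2) * px t z :=
  pdE (1,0) p q r s t hp hq hr hs ht
lemma pyE (p q r s t : ℝ × ℝ → ℝ)
    (hp : DifferentiableAt ℝ p z) (hq : DifferentiableAt ℝ q z)
    (hr : DifferentiableAt ℝ r z) (hs : DifferentiableAt ℝ s z)
    (ht : DifferentiableAt ℝ t z) :
    py (fun w => (1 + q w ^ 2) * r w - 2 * p w * q w * s w + (1 + p w ^ 2) * t w) z
      = (2 * q z * py q z) * r z + (1 + q z ^ 2) * py r z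
        - 2 * (py p z * q z * s z + p z * py q z * s z + p z * q z * py s z)
        + (2 * p z * py p z) * t z + (1 + p z ^ 2) * py t z :=
  pdE (0,1) p q r s t hp hq hr hs ht

end pxpy

/-- Every `C²` solution `φ(p,q)` of the determining equation
`(1 + p²)·φ_pp + 2pq·φ_pq + (1 + q²)·φ_qq = 0` generates a contact symmetry
`v = φ(u_x, u_y)` of the two-dimensional minimal surface equation. -/
theorem determining_equation_gives_contact_symmetry
    (φ : ℝ × ℝ → ℝ) (hφ : ContDiff ℝ 2 φ)
    (hdet : ∀ z : ℝ × ℝ, (1 + z.1 ^ 2) * px (px φ) z + 2 * z.1 * z.2 * py (px φ) z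
      + (1 + z.2 ^ 2) * py (py φ) z = 0) :
    ∀ (Ω : Set (ℝ × ℝ)), IsOpen Ω → ∀ u : ℝ × ℝ → ℝ, ContDiffOn ℝ 3 u Ω →
      (∀ z ∈ Ω, msOp u z = 0) →
      ∀ z ∈ Ω, HasDerivAt
        (fun ε : ℝ => msOp (fun w => u w + ε * φ (px u w, py u w)) z) 0 0 := by
  intro Ω hΩ u hu hms z hz
  have hmem : Ω ∈ nhds z := hΩ.mem_nhds hz
  -- regularity of the derivatives of u
  have p1C2 : ContDiffOn ℝ 2 (px u) Ω :=
    (hu.fderiv_of_isOpen hΩ (by norm_num)).clm_apply contDiffOn_const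
  have q1C2 : ContDiffOn ℝ 2 (py u) Ω :=
    (hu.fderiv_of_isOpen hΩ (by norm_num)).clm_apply contDiffOn_const
  have r2C1 : ContDiffOn ℝ 1 (px (px u)) Ω :=
    (p1C2.fderiv_of_isOpen hΩ (by norm_num)).clm_apply contDiffOn_const
  have s2C1 : ContDiffOn ℝ 1 (py (px u)) Ω :=
    (p1C2.fderiv_of_isOpen hΩ (by norm_num)).clm_apply contDiffOn_const
  have t2C1 : ContDiffOn ℝ 1 (py (py u)) Ω :=
    (q1C2.fderiv_of_isOpen hΩ (by norm_num)).clm_apply contDiffOn_const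
  have du : ∀ w ∈ Ω, DifferentiableAt ℝ u w := fun w hw =>
    (hu.contDiffAt (hΩ.mem_nhds hw)).differentiableAt (by norm_num)
  have dp1 : ∀ w ∈ Ω, DifferentiableAt ℝ (px u) w := fun w hw =>
    (p1C2.contDiffAt (hΩ.mem_nhds hw)).differentiableAt (by norm_num)
  have dq1 : ∀ w ∈ Ω, DifferentiableAt ℝ (py u) w := fun w hw =>
    (q1C2.contDiffAt (hΩ.mem_nhds hw)).differentiableAt (by norm_num)
  have dr2 : DifferentiableAt ℝ (px (px u)) z :=
    (r2C1.contDiffAt hmem).differentiableAt (by norm_num)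
  have ds2 : DifferentiableAt ℝ (py (px u)) z :=
    (s2C1.contDiffAt hmem).differentiableAt (by norm_num)
  have dt2 : DifferentiableAt ℝ (py (py u)) z :=
    (t2C1.contDiffAt hmem).differentiableAt (by norm_num)
  -- regularity of φ
  have dφ : Differentiable ℝ φ := hφ.differentiable (by norm_num)
  have hφ1 : ContDiff ℝ 1 (px φ) :=
    (hφ.fderiv_right (by norm_num)).clm_apply contDiff_const
  have hφ2 : ContDiff ℝ 1 (py φ) :=
    (hφ.fderiv_right (by norm_num)).clm_apply contDiff_const
  have dφ1 : Differentiable ℝ (px φ) := hφ1.differentiable (by norm_num)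
  have dφ2 : Differentiable ℝ (py φ) := hφ2.differentiable (by norm_num)
  -- symmetry of second derivatives
  have hsymm : ∀ w ∈ Ω, px (py u) w = py (px u) w := fun w hw =>
    clairaut ((hu.contDiffAt (hΩ.mem_nhds hw)).of_le (by norm_num))
  have hsymp1 : px (py (px u)) z = py (px (px u)) z :=
    clairaut (p1C2.contDiffAt hmem)
  have hsymq1 : px (py (py u)) z = py (px (py u)) z :=
    clairaut (q1C2.contDiffAt hmem)
  have hcc : py (px (py u)) z = py (py (px u)) z := py_congr hΩ hz hsymm
  have hsymφ : px (py φ) (px u z, py u z) = py (px φ) (px u z, py u z) :=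
    clairaut hφ.contDiffAt
  -- v = φ(u_x, u_y) and its derivatives
  have dv : ∀ w ∈ Ω, DifferentiableAt ℝ (fun w' => φ (px u w', py u w')) w :=
    fun w hw => (dφ (px u w, py u w)).comp w ((dp1 w hw).prodMk (dq1 w hw))
  have hA1 : ∀ w ∈ Ω, px (fun w' => φ (px u w', py u w')) w
      = px φ (px u w, py u w) * px (px u) w + py φ (px u w, py u w) * py (px u) w := by
    intro w hw
    have h := px_comp φ (px u) (py u) (dφ _) (dp1 w hw) (dq1 w hw)
    rw [hsymm w hw] at h
    exact h
  have hA2 : ∀ w ∈ Ω, py (fun w' => φ (px u w', py u w')) w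
      = px φ (px u w, py u w) * py (px u) w + py φ (px u w, py u w) * py (py u) w :=
    fun w hw => py_comp φ (px u) (py u) (dφ _) (dp1 w hw) (dq1 w hw)
  have dF1 : DifferentiableAt ℝ (fun w => px φ (px u w, py u w)) z :=
    (dφ1 (px u z, py u z)).comp (g := px φ) z ((dp1 z hz).prodMk (dq1 z hz))
  have dF2 : DifferentiableAt ℝ (fun w => py φ (px u w, py u w)) z :=
    (dφ2 (px u z, py u z)).comp (g := py φ) z ((dp1 z hz).prodMk (dq1 z hz))
  have hF1x : px (fun w => px φ (px u w, py u w)) z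
      = px (px φ) (px u z, py u z) * px (px u) z
        + py (px φ) (px u z, py u z) * py (px u) z := by
    have h := px_comp (px φ) (px u) (py u) (dφ1 _) (dp1 z hz) (dq1 z hz)
    rw [hsymm z hz] at h
    exact h
  have hF1y : py (fun w => px φ (px u w, py u w)) z
      = px (px φ) (px u z, py u z) * py (px u) z
        + py (px φ) (px u z, py u z) * py (py u) z :=
    py_comp (px φ) (px u) (py u) (dφ1 _) (dp1 z hz) (dq1 z hz)
  have hF2x : px (fun w => py φ (px u w, py u w)) z
      = py (px φ) (px u z, py u z) * px (px u) z
        + py (py φ) (px u z, py u z) * py (px u) z := by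
    have h := px_comp (py φ) (px u) (py u) (dφ2 _) (dp1 z hz) (dq1 z hz)
    rw [hsymm z hz, hsymφ] at h
    exact h
  have hF2y : py (fun w => py φ (px u w, py u w)) z
      = py (px φ) (px u z, py u z) * py (px u) z
        + py (py φ) (px u z, py u z) * py (py u) z := by
    have h := py_comp (py φ) (px u) (py u) (dφ2 _) (dp1 z hz) (dq1 z hz)
    rw [hsymφ] at h
    exact h
  -- second derivatives of v
  have dP1prod : DifferentiableAt ℝ
      (fun w => px φ (px u w, py u w) * px (px u) w) z := dF1.mul dr2
  have dP2prod : DifferentiableAt ℝ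
      (fun w => py φ (px u w, py u w) * py (px u) w) z := dF2.mul ds2
  have dQ1prod : DifferentiableAt ℝ
      (fun w => px φ (px u w, py u w) * py (px u) w) z := dF1.mul ds2
  have dQ2prod : DifferentiableAt ℝ
      (fun w => py φ (px u w, py u w) * py (py u) w) z := dF2.mul dt2
  have dpxv : DifferentiableAt ℝ (px (fun w' => φ (px u w', py u w'))) z :=
    diff_congr hΩ hz hA1 (dP1prod.add dP2prod)
  have dpyv : DifferentiableAt ℝ (py (fun w' => φ (px u w', py u w'))) z :=
    diff_congr hΩ hz hA2 (dQ1prod.add dQ2prod)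
  have hP' : px (fun w' => φ (px u w', py u w')) z
      = px φ (px u z, py u z) * px (px u) z + py φ (px u z, py u z) * py (px u) z :=
    hA1 z hz
  have hQ' : py (fun w' => φ (px u w', py u w')) z
      = px φ (px u z, py u z) * py (px u) z + py φ (px u z, py u z) * py (py u) z :=
    hA2 z hz
  have hR' : px (px (fun w' => φ (px u w', py u w'))) z
      = (px (px φ) (px u z, py u z) * px (px u) z
          + py (px φ) (px u z, py u z) * py (px u) z) * px (px u) z
        + px φ (px u z, py u z) * px (px (px u)) z
        + (py (px φ) (px u z, py u z) * px (px u) z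
          + py (py φ) (px u z, py u z) * py (px u) z) * py (px u) z
        + py φ (px u z, py u z) * py (px (px u)) z := by
    rw [px_congr hΩ hz hA1, px_add dP1prod dP2prod, px_mul dF1 dr2, px_mul dF2 ds2,
      hF1x, hF2x, hsymp1]
    ring
  have hS' : py (px (fun w' => φ (px u w', py u w'))) z
      = (px (px φ) (px u z, py u z) * py (px u) z
          + py (px φ) (px u z, py u z) * py (py u) z) * px (px u) z
        + px φ (px u z, py u z) * py (px (px u)) z
        + (py (px φ) (px u z, py u z) * py (px u) z
          + py (py φ) (px u z, py u z) * py (py u) z) * py (px u) z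
        + py φ (px u z, py u z) * py (py (px u)) z := by
    rw [py_congr hΩ hz hA1, py_add dP1prod dP2prod, py_mul dF1 dr2, py_mul dF2 ds2,
      hF1y, hF2y]
    ring
  have hT' : py (py (fun w' => φ (px u w', py u w'))) z
      = (px (px φ) (px u z, py u z) * py (px u) z
          + py (px φ) (px u z, py u z) * py (py u) z) * py (px u) z
        + px φ (px u z, py u z) * py (py (px u)) z
        + (py (px φ) (px u z, py u z) * py (px u) z
          + py (py φ) (px u z, py u z) * py (py u) z) * py (py u) z
        + py φ (px u z, py u z) * py (py (py u)) z := by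
    rw [py_congr hΩ hz hA2, py_add dQ1prod dQ2prod, py_mul dF1 ds2, py_mul dF2 dt2,
      hF1y, hF2y]
    ring
  -- the minimal surface equation and its derivatives at z
  have hE0 : (1 + py u z ^ 2) * px (px u) z - 2 * px u z * py u z * py (px u) z
      + (1 + px u z ^ 2) * py (py u) z = 0 := hms z hz
  have hms0 : px (msOp u) z = 0 := by
    rw [px_congr hΩ hz hms]
    simp [px]
  have hms0y : py (msOp u) z = 0 := by
    rw [py_congr hΩ hz hms]
    simp [py]
  have hEx : px (msOp u) z
      = (2 * py u z * px (py u) z) * px (px u) z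
        + (1 + py u z ^ 2) * px (px (px u)) z
        - 2 * (px (px u) z * py u z * py (px u) z
            + px u z * px (py u) z * py (px u) z
            + px u z * py u z * px (py (px u)) z)
        + (2 * px u z * px (px u) z) * py (py u) z
        + (1 + px u z ^ 2) * px (py (py u)) z :=
    pxE (px u) (py u) (px (px u)) (py (px u)) (py (py u))
      (dp1 z hz) (dq1 z hz) dr2 ds2 dt2
  have hEy : py (msOp u) z
      = (2 * py u z * py (py u) z) * px (px u) z
        + (1 + py u z ^ 2) * py (px (px u)) z
        - 2 * (py (px u) z * py u z * py (px u) z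
            + px u z * py (py u) z * py (px u) z
            + px u z * py u z * py (py (px u)) z)
        + (2 * px u z * py (px u) z) * py (py u) z
        + (1 + px u z ^ 2) * py (py (py u)) z :=
    pyE (px u) (py u) (px (px u)) (py (px u)) (py (py u))
      (dp1 z hz) (dq1 z hz) dr2 ds2 dt2
  rw [hsymm z hz, hsymp1, hsymq1, hcc, hms0] at hEx
  rw [hms0y] at hEy
  have hEx' := hEx.symm
  have hEy' := hEy.symm
  have hDet : (1 + px u z ^ 2) * px (px φ) (px u z, py u z)
      + 2 * px u z * py u z * py (px φ) (px u z, py u z)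
      + (1 + py u z ^ 2) * py (py φ) (px u z, py u z) = 0 :=
    hdet (px u z, py u z)
  -- rewrite the map ε ↦ E(u + εv)(z) as an explicit polynomial in ε
  have hfun : (fun ε : ℝ => msOp (fun w => u w + ε * φ (px u w, py u w)) z)
      = fun ε : ℝ =>
        (1 + (py u z + ε * py (fun w' => φ (px u w', py u w')) z) ^ 2)
            * (px (px u) z + ε * px (px (fun w' => φ (px u w', py u w'))) z)
          - 2 * (px u z + ε * px (fun w' => φ (px u w', py u w')) z)
            * (py u z + ε * py (fun w' => φ (px u w', py u w')) z)
            * (py (px u) z + ε * py (px (fun w' => φ (px u w', py u w'))) z)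
          + (1 + (px u z + ε * px (fun w' => φ (px u w', py u w')) z) ^ 2)
            * (py (py u) z + ε * py (py (fun w' => φ (px u w', py u w'))) z) := by
    funext ε
    have hx : ∀ w ∈ Ω, px (fun w' => u w' + ε * φ (px u w', py u w')) w
        = px u w + ε * px (fun w' => φ (px u w', py u w')) w :=
      fun w hw => px_add_smul ε (du w hw) (dv w hw)
    have hy : ∀ w ∈ Ω, py (fun w' => u w' + ε * φ (px u w', py u w')) w
        = py u w + ε * py (fun w' => φ (px u w', py u w')) w :=
      fun w hw => py_add_smul ε (du w hw) (dv w hw)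
    have e1 : px (px (fun w' => u w' + ε * φ (px u w', py u w'))) z
        = px (px u) z + ε * px (px (fun w' => φ (px u w', py u w'))) z := by
      rw [px_congr hΩ hz hx]
      exact px_add_smul ε (dp1 z hz) dpxv
    have e2 : py (px (fun w' => u w' + ε * φ (px u w', py u w'))) z
        = py (px u) z + ε * py (px (fun w' => φ (px u w', py u w'))) z := by
      rw [py_congr hΩ hz hx]
      exact py_add_smul ε (dp1 z hz) dpxv
    have e3 : py (py (fun w' => u w' + ε * φ (px u w', py u w'))) z
        = py (py u) z + ε * py (py (fun w' => φ (px u w', py u w'))) z := by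
      rw [py_congr hΩ hz hy]
      exact py_add_smul ε (dq1 z hz) dpyv
    show (1 + (py (fun w' => u w' + ε * φ (px u w', py u w')) z) ^ 2)
          * px (px (fun w' => u w' + ε * φ (px u w', py u w'))) z
        - 2 * px (fun w' => u w' + ε * φ (px u w', py u w')) z
          * py (fun w' => u w' + ε * φ (px u w', py u w')) z
          * py (px (fun w' => u w' + ε * φ (px u w', py u w'))) z
        + (1 + (px (fun w' => u w' + ε * φ (px u w', py u w')) z) ^ 2)
          * py (py (fun w' => u w' + ε * φ (px u w', py u w'))) z = _
    rw [hx z hz, hy z hz, e1, e2, e3]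
  rw [hfun]
  -- differentiate the polynomial in ε at ε = 0
  have c1 : HasDerivAt
      (fun ε : ℝ => px u z + ε * px (fun w' => φ (px u w', py u w')) z)
      (px (fun w' => φ (px u w', py u w')) z) 0 := by
    simpa using
      ((hasDerivAt_id (0:ℝ)).mul_const (px (fun w' => φ (px u w', py u w')) z)).const_add
        (px u z)
  have c2 : HasDerivAt
      (fun ε : ℝ => py u z + ε * py (fun w' => φ (px u w', py u w')) z)
      (py (fun w' => φ (px u w', py u w')) z) 0 := by
    simpa using
      ((hasDerivAt_id (0:ℝ)).mul_const (py (fun w' => φ (px u w', py u w')) z)).const_add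
        (py u z)
  have c3 : HasDerivAt
      (fun ε : ℝ => px (px u) z + ε * px (px (fun w' => φ (px u w', py u w'))) z)
      (px (px (fun w' => φ (px u w', py u w'))) z) 0 := by
    simpa using
      ((hasDerivAt_id (0:ℝ)).mul_const (px (px (fun w' => φ (px u w', py u w'))) z)).const_add
        (px (px u) z)
  have c4 : HasDerivAt
      (fun ε : ℝ => py (px u) z + ε * py (px (fun w' => φ (px u w', py u w'))) z)
      (py (px (fun w' => φ (px u w', py u w'))) z) 0 := by
    simpa using
      ((hasDerivAt_id (0:ℝ)).mul_const (py (px (fun w' => φ (px u w', py u w'))) z)).const_add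
        (py (px u) z)
  have c5 : HasDerivAt
      (fun ε : ℝ => py (py u) z + ε * py (py (fun w' => φ (px u w', py u w'))) z)
      (py (py (fun w' => φ (px u w', py u w'))) z) 0 := by
    simpa using
      ((hasDerivAt_id (0:ℝ)).mul_const (py (py (fun w' => φ (px u w', py u w'))) z)).const_add
        (py (py u) z)
  have h1 := (c2.pow 2).const_add 1
  have h2 := (c1.pow 2).const_add 1
  have H := ((h1.mul c3).sub (((c1.const_mul 2).mul c2).mul c4)).add (h2.mul c5)
  refine H.congr_deriv ?_
  symm
  simp only [Pi.pow_apply, Pi.mul_apply]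
  rw [hP', hQ', hR', hS', hT']
  linear_combination
    (-(px φ (px u z, py u z))) * hEx' + (-(py φ (px u z, py u z))) * hEy'
    + (px (px u) z * py (py u) z - py (px u) z ^ 2) * hDet
    - (px (px u) z * px (px φ) (px u z, py u z)
        + 2 * py (px u) z * py (px φ) (px u z, py u z)
        + py (py u) z * py (py φ) (px u z, py u z)) * hE0
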